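/- Under the Gaussian mixture model f = Σ_ℓ w_ℓ φ_{Σ_ℓ}(·−μ_ℓ), with kernel estimator f̂ = (1/n)Σ_i φ_H(·−x_i) from an i.i.d. sample, the expected integrated square error satisfies E[d_ISE(f̂, f)] = (1/n)(4π)^{-D/2}|H|^{-1/2} + wᵀ((1 − 1/n)Ω₂ − 2Ω₁ + Ω₀)w, where [Ω_α]_{ij} = φ_{αH + Σ_i + Σ_j}(μ_i − μ_j) for α ∈ {0,1,2}. -/

import Mathlib

open MeasureTheory Real Matrix

/-- The `D`-variate Gaussian density with mean `0` and covariance matrix `H`. -/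
noncomputable def gauss (D : ℕ) (H : Matrix (Fin D) (Fin D) ℝ) (x : Fin D → ℝ) : ℝ :=
  (2 * Real.pi) ^ (-(D : ℝ) / 2) * H.det ^ (-(1 : ℝ) / 2) *
    Real.exp (-(1 / 2) * (x ⬝ᵥ (H⁻¹ *ᵥ x)))

section basics

variable {D : ℕ} {H : Matrix (Fin D) (Fin D) ℝ}

lemma gauss_pos (hH : H.PosDef) (x : Fin D → ℝ) : 0 < gauss D H x := by
  have := hH.det_pos
  unfold gauss
  positivity

lemma quad_nonneg (hH : H.PosDef) (x : Fin D → ℝ) : 0 ≤ x ⬝ᵥ (H⁻¹ *ᵥ x) := by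
  have h := hH.inv.posSemidef.dotProduct_mulVec_nonneg x
  simpa using h

lemma gauss_zero_eq (H : Matrix (Fin D) (Fin D) ℝ) :
    gauss D H 0 = (2 * Real.pi) ^ (-(D : ℝ) / 2) * H.det ^ (-(1 : ℝ) / 2) := by
  simp [gauss]

lemma gauss_le (hH : H.PosDef) (x : Fin D → ℝ) : gauss D H x ≤ gauss D H 0 := by
  rw [gauss_zero_eq]
  unfold gauss
  have h1 : Real.exp (-(1 / 2) * (x ⬝ᵥ (H⁻¹ *ᵥ x))) ≤ 1 := by
    rw [Real.exp_le_one_iff]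
    nlinarith [quad_nonneg hH x]
  have h2 : (0:ℝ) < (2 * Real.pi) ^ (-(D : ℝ) / 2) * H.det ^ (-(1 : ℝ) / 2) := by
    have := hH.det_pos
    positivity
  nlinarith

lemma gauss_neg (H : Matrix (Fin D) (Fin D) ℝ) (x : Fin D → ℝ) :
    gauss D H (-x) = gauss D H x := by
  simp [gauss, Matrix.mulVec_neg, dotProduct_neg, neg_dotProduct]

lemma continuous_gauss (H : Matrix (Fin D) (Fin D) ℝ) : Continuous (gauss D H) := by
  unfold gauss
  simp only [dotProduct, Matrix.mulVec]
  fun_prop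

end basics

section norma

variable {D : ℕ} {H : Matrix (Fin D) (Fin D) ℝ}

lemma gauss_key (hH : H.PosDef) :
    Integrable (gauss D H) ∧ ∫ x, gauss D H x = 1 := by
  have hdetH : 0 < H.det := hH.det_pos
  have hN : (H⁻¹).PosDef := hH.inv
  open scoped MatrixOrder in
  set S := CFC.sqrt (H⁻¹) with hSdef
  open scoped MatrixOrder in
  have hS : S.PosSemidef := (CFC.sqrt_nonneg _).posSemidef
  open scoped MatrixOrder in
  have hSS : S * S = H⁻¹ := CFC.sqrt_mul_sqrt_self _ hN.posSemidef.nonneg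
  have hdet2 : S.det * S.det = (H.det)⁻¹ := by
    rw [← Matrix.det_mul, hSS, Matrix.det_nonsing_inv, Ring.inverse_eq_inv']
  have hdetS : S.det ≠ 0 := by
    intro h; rw [h, mul_zero] at hdet2
    exact (inv_ne_zero hdetH.ne') hdet2.symm
  have habs : |S.det| = Real.sqrt (H.det)⁻¹ := by
    rw [← hdet2, Real.sqrt_mul_self_eq_abs]
  have hsym : Sᵀ = S := by
    have := hS.isHermitian
    rwa [Matrix.IsHermitian, Matrix.conjTranspose_eq_transpose_of_trivial] at this
  -- quadratic form identity
  have hquad : ∀ x : Fin D → ℝ, x ⬝ᵥ (H⁻¹ *ᵥ x) = ∑ i, (S *ᵥ x) i ^ 2 := by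
    intro x
    rw [← hSS, ← Matrix.mulVec_mulVec, Matrix.dotProduct_mulVec]
    have : x ᵥ* S = S *ᵥ x := by rw [← hsym, Matrix.vecMul_transpose, hsym]
    rw [this, dotProduct]
    exact Finset.sum_congr rfl fun i _ => (sq ((S *ᵥ x) i)).symm
  -- the product Gaussian
  set G : (Fin D → ℝ) → ℝ := fun y => ∏ i, Real.exp (-(1/2) * (y i)^2) with hGdef
  have hGint : Integrable G :=
    Integrable.fintype_prod (f := fun (_ : Fin D) (t : ℝ) => Real.exp (-(1/2) * t^2))
      (fun _ => integrable_exp_neg_mul_sq (by norm_num))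
  have hGval : ∫ y, G y = Real.sqrt (2*π) ^ D := by
    erw [hGdef, MeasureTheory.integral_fintype_prod_eq_pow (ι := Fin D)
      (fun (t : ℝ) => Real.exp (-(1/2) * t^2)), integral_gaussian]
    have : (π : ℝ) / (1/2) = 2 * π := by ring
    rw [this]
    simp
  -- the measurable equiv given by S
  have hinvS : Invertible S := S.invertibleOfIsUnitDet (Ne.isUnit hdetS)
  let eL : (Fin D → ℝ) ≃ₗ[ℝ] (Fin D → ℝ) := S.toLinearEquiv' hinvS
  let eM : (Fin D → ℝ) ≃ᵐ (Fin D → ℝ) :=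
    eL.toContinuousLinearEquiv.toHomeomorph.toMeasurableEquiv
  have heM : ∀ x, eM x = S *ᵥ x := fun x => rfl
  have hmap : Measure.map (⇑eM) volume = ENNReal.ofReal |(S.det)⁻¹| • volume := by
    have h := Real.map_matrix_volume_pi_eq_smul_volume_pi (M := S) hdetS
    rw [← h]
    rfl
  -- rewrite gauss as c * G ∘ eM
  set c : ℝ := (2 * Real.pi) ^ (-(D : ℝ) / 2) * H.det ^ (-(1:ℝ) / 2) with hc
  have hge : ∀ x, gauss D H x = c * G (eM x) := by
    intro x
    rw [heM, hGdef]
    simp only [gauss, ← Real.exp_sum]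
    rw [hquad x, Finset.mul_sum]
  have hint2 : Integrable (fun x => G (eM x)) := by
    rw [← Function.comp_def, ← integrable_map_equiv eM G, hmap]
    refine hGint.smul_measure ?_
    exact ENNReal.ofReal_ne_top
  have hval2 : ∫ x, G (eM x) = |S.det|⁻¹ * Real.sqrt (2*π) ^ D := by
    have := MeasureTheory.integral_map_equiv (μ := volume) eM G
    rw [← this, hmap, integral_smul_measure, hGval]
    rw [ENNReal.toReal_ofReal (abs_nonneg _), abs_inv]
    simp
  constructor
  · refine (hint2.const_mul c).congr ?_
    filter_upwards with x using (hge x).symm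
  · rw [MeasureTheory.integral_congr_ae (Filter.Eventually.of_forall hge),
      MeasureTheory.integral_const_mul, hval2, habs]
    -- now pure arithmetic
    have h1 : Real.sqrt (2*π) ^ D = (2*π) ^ ((D:ℝ)/2) := by
      rw [Real.sqrt_eq_rpow, ← Real.rpow_natCast ((2*π) ^ ((1:ℝ)/2)) D,
        ← Real.rpow_mul (by positivity)]
      ring_nf
    have h2 : (Real.sqrt (H.det)⁻¹)⁻¹ = H.det ^ ((1:ℝ)/2) := by
      rw [Real.sqrt_inv, inv_inv, Real.sqrt_eq_rpow]
    rw [h1, h2, hc]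
    have e1 : (2*π:ℝ) ^ (-(D:ℝ)/2) * (2*π) ^ ((D:ℝ)/2) = 1 := by
      have h : (-(D:ℝ)/2 + (D:ℝ)/2) = 0 := by ring
      rw [← Real.rpow_add (by positivity), h, Real.rpow_zero]
    have e2 : H.det ^ (-(1:ℝ)/2) * H.det ^ ((1:ℝ)/2) = 1 := by
      have h : (-(1:ℝ)/2 + (1:ℝ)/2) = 0 := by ring
      rw [← Real.rpow_add hdetH, h, Real.rpow_zero]
    linear_combination ((2*π:ℝ) ^ (-(D:ℝ)/2) * (2*π) ^ ((D:ℝ)/2)) * e2 + e1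

end norma

section helpers

variable {D : ℕ}

lemma dp_helper (M N : Matrix (Fin D) (Fin D) ℝ) (a b : Fin D → ℝ) :
    (M *ᵥ a) ⬝ᵥ (N *ᵥ b) = a ⬝ᵥ ((Mᵀ * N) *ᵥ b) := by
  rw [← Matrix.mulVec_mulVec, Matrix.dotProduct_mulVec a, Matrix.vecMul_transpose]

lemma dp_swap {M : Matrix (Fin D) (Fin D) ℝ} (hM : Mᵀ = M) (u v : Fin D → ℝ) :
    u ⬝ᵥ (M *ᵥ v) = v ⬝ᵥ (M *ᵥ u) := by
  rw [Matrix.dotProduct_mulVec u]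
  conv_lhs => rw [← hM]
  rw [Matrix.vecMul_transpose, dotProduct_comm]

lemma sq_expand {M : Matrix (Fin D) (Fin D) ℝ} (hM : Mᵀ = M) (u v : Fin D → ℝ) :
    (u - v) ⬝ᵥ (M *ᵥ (u - v)) =
      u ⬝ᵥ (M *ᵥ u) - 2 * (u ⬝ᵥ (M *ᵥ v)) + v ⬝ᵥ (M *ᵥ v) := by
  rw [Matrix.mulVec_sub, dotProduct_sub, sub_dotProduct, sub_dotProduct,
    dp_swap hM v u]
  ring

variable {A B : Matrix (Fin D) (Fin D) ℝ}

lemma posdef_symm (hA : A.PosDef) : Aᵀ = A := by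
  have := hA.isHermitian
  rwa [Matrix.IsHermitian, Matrix.conjTranspose_eq_transpose_of_trivial] at this

lemma quad_split (hA : A.PosDef) (hB : B.PosDef) (a b : Fin D → ℝ) (x : Fin D → ℝ) :
    (x - a) ⬝ᵥ (A⁻¹ *ᵥ (x - a)) + (x - b) ⬝ᵥ (B⁻¹ *ᵥ (x - b)) =
      (x - (A⁻¹ + B⁻¹)⁻¹ *ᵥ (A⁻¹ *ᵥ a + B⁻¹ *ᵥ b)) ⬝ᵥ
        ((A⁻¹ + B⁻¹) *ᵥ (x - (A⁻¹ + B⁻¹)⁻¹ *ᵥ (A⁻¹ *ᵥ a + B⁻¹ *ᵥ b))) +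
      (a - b) ⬝ᵥ ((A + B)⁻¹ *ᵥ (a - b)) := by
  set P := A⁻¹ with hP
  set Q := B⁻¹ with hQ
  set C := (P + Q)⁻¹ with hC
  set R := (A + B)⁻¹ with hR
  have hdA : IsUnit A.det := hA.det_pos.ne'.isUnit
  have hdB : IsUnit B.det := hB.det_pos.ne'.isUnit
  have hPQpd : (P + Q).PosDef := hA.inv.add hB.inv
  have hdPQ : IsUnit (P + Q).det := hPQpd.det_pos.ne'.isUnit
  have hAt : Aᵀ = A := posdef_symm hA
  have hBt : Bᵀ = B := posdef_symm hB
  have hPt : Pᵀ = P := by rw [hP, Matrix.transpose_nonsing_inv, hAt]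
  have hQt : Qᵀ = Q := by rw [hQ, Matrix.transpose_nonsing_inv, hBt]
  have hPQt : (P + Q)ᵀ = P + Q := by rw [Matrix.transpose_add, hPt, hQt]
  have hCt : Cᵀ = C := by rw [hC, Matrix.transpose_nonsing_inv, hPQt]
  have hRt : Rᵀ = R := by
    rw [hR, Matrix.transpose_nonsing_inv, Matrix.transpose_add, hAt, hBt]
  have hAP : A * P = 1 := Matrix.mul_nonsing_inv A hdA
  have hBQ : B * Q = 1 := Matrix.mul_nonsing_inv B hdB
  have hPQC : (P + Q) * C = 1 := Matrix.mul_nonsing_inv _ hdPQ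
  have hCPQ : C * (P + Q) = 1 := Matrix.nonsing_inv_mul _ hdPQ
  -- key matrix identities
  have hPCQ : P * (C * Q) = R := by
    symm
    rw [hR]
    apply Matrix.inv_eq_right_inv
    have h2 : (A + B) * P = 1 + B * P := by rw [Matrix.add_mul, hAP]
    calc (A + B) * (P * (C * Q)) = ((A + B) * P) * (C * Q) := by rw [Matrix.mul_assoc]
      _ = (1 + B * P) * (C * Q) := by rw [h2]
      _ = (B * (Q + P)) * (C * Q) := by rw [Matrix.mul_add, hBQ]
      _ = B * (((Q + P) * C) * Q) := by noncomm_ring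
      _ = B * Q := by rw [add_comm Q P, hPQC, Matrix.one_mul]
      _ = 1 := hBQ
  have hQCP : Q * (C * P) = R := by
    symm
    rw [hR]
    apply Matrix.inv_eq_right_inv
    have h2 : (A + B) * Q = A * Q + 1 := by rw [Matrix.add_mul, hBQ]
    calc (A + B) * (Q * (C * P)) = ((A + B) * Q) * (C * P) := by rw [Matrix.mul_assoc]
      _ = (A * Q + 1) * (C * P) := by rw [h2]
      _ = (A * (Q + P)) * (C * P) := by rw [Matrix.mul_add, hAP]
      _ = A * (((Q + P) * C) * P) := by noncomm_ring
      _ = A * P := by rw [add_comm Q P, hPQC, Matrix.one_mul]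
      _ = 1 := hAP
  have hCsplit : C * P = 1 - C * Q := by
    rw [eq_sub_iff_add_eq, ← Matrix.mul_add]; exact hCPQ
  have hPCP : P * (C * P) = P - R := by
    rw [hCsplit, Matrix.mul_sub, Matrix.mul_one, hPCQ]
  have hQCQ : Q * (C * Q) = Q - R := by
    have hCsplit' : C * Q = 1 - C * P := by
      rw [eq_sub_iff_add_eq, add_comm, ← Matrix.mul_add]; exact hCPQ
    rw [hCsplit', Matrix.mul_sub, Matrix.mul_one, hQCP]
  set s : Fin D → ℝ := P *ᵥ a + Q *ᵥ b with hs
  set c : Fin D → ℝ := C *ᵥ s with hcv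
  have h1 : (P + Q) *ᵥ c = s := by
    rw [hcv, Matrix.mulVec_mulVec, hPQC, Matrix.one_mulVec]
  -- expand everything
  rw [sq_expand hPt, sq_expand hQt, sq_expand hPQt, sq_expand hRt]
  have e1 : x ⬝ᵥ ((P + Q) *ᵥ x) = x ⬝ᵥ (P *ᵥ x) + x ⬝ᵥ (Q *ᵥ x) := by
    rw [Matrix.add_mulVec, dotProduct_add]
  have e2 : x ⬝ᵥ ((P + Q) *ᵥ c) = x ⬝ᵥ (P *ᵥ a) + x ⬝ᵥ (Q *ᵥ b) := by
    rw [h1, hs, dotProduct_add]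
  have e3 : c ⬝ᵥ ((P + Q) *ᵥ c) =
      (a ⬝ᵥ (P *ᵥ a) - a ⬝ᵥ (R *ᵥ a)) + 2 * (a ⬝ᵥ (R *ᵥ b))
        + (b ⬝ᵥ (Q *ᵥ b) - b ⬝ᵥ (R *ᵥ b)) := by
    rw [h1, hcv, dotProduct_comm, hs]
    rw [Matrix.mulVec_add, dotProduct_add, add_dotProduct,
      add_dotProduct, Matrix.mulVec_mulVec, Matrix.mulVec_mulVec]
    rw [dp_helper P (C * P) a a, dp_helper P (C * Q) a b, dp_helper Q (C * P) b a,
      dp_helper Q (C * Q) b b, hPt, hQt, hPCP, hPCQ, hQCP, hQCQ]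
    rw [Matrix.sub_mulVec, dotProduct_sub, Matrix.sub_mulVec, dotProduct_sub]
    rw [dp_swap hRt b a]
    ring
  rw [e1, e2, e3]
  ring

end helpers
section prod

variable {D : ℕ} {A B : Matrix (Fin D) (Fin D) ℝ}

lemma det_sum_mul (hA : A.PosDef) (hB : B.PosDef) :
    (A + B).det * ((A⁻¹ + B⁻¹)⁻¹).det = A.det * B.det := by
  have hdA : IsUnit A.det := hA.det_pos.ne'.isUnit
  have hdB : IsUnit B.det := hB.det_pos.ne'.isUnit
  have hPQpd : (A⁻¹ + B⁻¹).PosDef := hA.inv.add hB.inv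
  have hdPQ : (A⁻¹ + B⁻¹).det ≠ 0 := hPQpd.det_pos.ne'
  have h1 : (A⁻¹ + B⁻¹) * B = A⁻¹ * B + 1 := by
    rw [Matrix.add_mul, Matrix.nonsing_inv_mul B hdB]
  have h2 : A + B = A * ((A⁻¹ + B⁻¹) * B) := by
    rw [h1, Matrix.mul_add, Matrix.mul_one, ← Matrix.mul_assoc,
      Matrix.mul_nonsing_inv A hdA, Matrix.one_mul, add_comm]
  rw [h2, Matrix.det_mul, Matrix.det_mul, Matrix.det_nonsing_inv, Ring.inverse_eq_inv']
  have hcancel : (A⁻¹ + B⁻¹).det * ((A⁻¹ + B⁻¹).det)⁻¹ = 1 := mul_inv_cancel₀ hdPQ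
  linear_combination (A.det * B.det) * hcancel

lemma gauss_prod_pt (hA : A.PosDef) (hB : B.PosDef) (a b x : Fin D → ℝ) :
    gauss D A (x - a) * gauss D B (x - b) =
      gauss D (A + B) (a - b) *
        gauss D ((A⁻¹ + B⁻¹)⁻¹)
          (x - (A⁻¹ + B⁻¹)⁻¹ *ᵥ (A⁻¹ *ᵥ a + B⁻¹ *ᵥ b)) := by
  have hdPQ : IsUnit (A⁻¹ + B⁻¹).det := (hA.inv.add hB.inv).det_pos.ne'.isUnit
  have hCpd : ((A⁻¹ + B⁻¹)⁻¹).PosDef := (hA.inv.add hB.inv).inv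
  have hq := quad_split hA hB a b x
  unfold gauss
  rw [Matrix.nonsing_inv_nonsing_inv _ hdPQ]
  have hconst : (A.det : ℝ) ^ (-(1:ℝ)/2) * B.det ^ (-(1:ℝ)/2) =
      (A + B).det ^ (-(1:ℝ)/2) * ((A⁻¹ + B⁻¹)⁻¹).det ^ (-(1:ℝ)/2) := by
    rw [← Real.mul_rpow hA.det_pos.le hB.det_pos.le,
      ← Real.mul_rpow (hA.add hB).det_pos.le hCpd.det_pos.le, det_sum_mul hA hB]
  have hexp : Real.exp (-(1/2) * ((x - a) ⬝ᵥ (A⁻¹ *ᵥ (x - a)))) *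
      Real.exp (-(1/2) * ((x - b) ⬝ᵥ (B⁻¹ *ᵥ (x - b)))) =
      Real.exp (-(1/2) * ((a - b) ⬝ᵥ ((A + B)⁻¹ *ᵥ (a - b)))) *
      Real.exp (-(1/2) * ((x - (A⁻¹ + B⁻¹)⁻¹ *ᵥ (A⁻¹ *ᵥ a + B⁻¹ *ᵥ b)) ⬝ᵥ
        ((A⁻¹ + B⁻¹) *ᵥ (x - (A⁻¹ + B⁻¹)⁻¹ *ᵥ (A⁻¹ *ᵥ a + B⁻¹ *ᵥ b))))) := by
    rw [← Real.exp_add, ← Real.exp_add]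
    congr 1
    linear_combination (-(1:ℝ)/2) * hq
  calc ((2 * π) ^ (-(D:ℝ)/2) * A.det ^ (-(1:ℝ)/2) * Real.exp (-(1/2) * ((x - a) ⬝ᵥ (A⁻¹ *ᵥ (x - a))))) *
        ((2 * π) ^ (-(D:ℝ)/2) * B.det ^ (-(1:ℝ)/2) * Real.exp (-(1/2) * ((x - b) ⬝ᵥ (B⁻¹ *ᵥ (x - b)))))
      = ((2 * π) ^ (-(D:ℝ)/2) * (2 * π) ^ (-(D:ℝ)/2)) *
        ((A.det ^ (-(1:ℝ)/2) * B.det ^ (-(1:ℝ)/2))) *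
        (Real.exp (-(1/2) * ((x - a) ⬝ᵥ (A⁻¹ *ᵥ (x - a)))) *
         Real.exp (-(1/2) * ((x - b) ⬝ᵥ (B⁻¹ *ᵥ (x - b))))) := by ring
    _ = _ := by rw [hconst, hexp]; ring

lemma gauss_prod_integrable (hA : A.PosDef) (hB : B.PosDef) (a b : Fin D → ℝ) :
    Integrable (fun x => gauss D A (x - a) * gauss D B (x - b)) := by
  have hCpd : ((A⁻¹ + B⁻¹)⁻¹).PosDef := (hA.inv.add hB.inv).inv
  have : (fun x => gauss D A (x - a) * gauss D B (x - b)) =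
      fun x => gauss D (A + B) (a - b) *
        gauss D ((A⁻¹ + B⁻¹)⁻¹) (x - (A⁻¹ + B⁻¹)⁻¹ *ᵥ (A⁻¹ *ᵥ a + B⁻¹ *ᵥ b)) := by
    funext x; exact gauss_prod_pt hA hB a b x
  rw [this]
  exact ((gauss_key hCpd).1.comp_sub_right _).const_mul _

lemma gauss_prod_integral (hA : A.PosDef) (hB : B.PosDef) (a b : Fin D → ℝ) :
    ∫ x, gauss D A (x - a) * gauss D B (x - b) = gauss D (A + B) (a - b) := by
  have hCpd : ((A⁻¹ + B⁻¹)⁻¹).PosDef := (hA.inv.add hB.inv).inv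
  have h : (fun x => gauss D A (x - a) * gauss D B (x - b)) =
      fun x => gauss D (A + B) (a - b) *
        gauss D ((A⁻¹ + B⁻¹)⁻¹) (x - (A⁻¹ + B⁻¹)⁻¹ *ᵥ (A⁻¹ *ᵥ a + B⁻¹ *ᵥ b)) := by
    funext x; exact gauss_prod_pt hA hB a b x
  rw [h, MeasureTheory.integral_const_mul,
    MeasureTheory.integral_sub_right_eq_self (gauss D ((A⁻¹ + B⁻¹)⁻¹)) _,
    (gauss_key hCpd).2, mul_one]

lemma integrable_gauss_sub {H : Matrix (Fin D) (Fin D) ℝ} (hH : H.PosDef) (a : Fin D → ℝ) :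
    Integrable (fun x => gauss D H (x - a)) :=
  (gauss_key hH).1.comp_sub_right a

lemma integral_gauss_sub {H : Matrix (Fin D) (Fin D) ℝ} (hH : H.PosDef) (a : Fin D → ℝ) :
    ∫ x, gauss D H (x - a) = 1 := by
  rw [MeasureTheory.integral_sub_right_eq_self (gauss D H) a]
  exact (gauss_key hH).2

lemma gauss_sub_comm (M : Matrix (Fin D) (Fin D) ℝ) (u v : Fin D → ℝ) :
    gauss D M (u - v) = gauss D M (v - u) := by
  rw [← gauss_neg M (v - u), neg_sub]

end prod

section inner

variable {D L : ℕ}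

lemma inner_int (n : ℕ) (w : Fin L → ℝ)
    (Cov : Fin L → Matrix (Fin D) (Fin D) ℝ) (hCov : ∀ ℓ, (Cov ℓ).PosDef)
    (μs : Fin L → (Fin D → ℝ))
    (H : Matrix (Fin D) (Fin D) ℝ) (hH : H.PosDef) (xs : Fin n → Fin D → ℝ) :
    ∫ x : Fin D → ℝ,
        ((1 / (n : ℝ)) * ∑ i, gauss D H (x - xs i)
          - ∑ ℓ, w ℓ * gauss D (Cov ℓ) (x - μs ℓ)) ^ 2
      = (∑ i, ∑ j, (1 / (n : ℝ))^2 * gauss D (H + H) (xs i - xs j))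
        - (∑ i, ∑ ℓ, (2 / (n : ℝ) * w ℓ) * gauss D (H + Cov ℓ) (xs i - μs ℓ))
        + (∑ k, ∑ ℓ, (w k * w ℓ) * gauss D (Cov k + Cov ℓ) (μs k - μs ℓ)) := by
  have key : ∀ x : Fin D → ℝ,
      ((1 / (n : ℝ)) * ∑ i, gauss D H (x - xs i)
        - ∑ ℓ, w ℓ * gauss D (Cov ℓ) (x - μs ℓ)) ^ 2
      = (∑ i, ∑ j, (1 / (n : ℝ))^2 * (gauss D H (x - xs i) * gauss D H (x - xs j)))
        - (∑ i, ∑ ℓ, (2 / (n : ℝ) * w ℓ) *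
            (gauss D H (x - xs i) * gauss D (Cov ℓ) (x - μs ℓ)))
        + (∑ k, ∑ ℓ, (w k * w ℓ) *
            (gauss D (Cov k) (x - μs k) * gauss D (Cov ℓ) (x - μs ℓ))) := by
    intro x
    set c : ℝ := 1 / (n : ℝ) with hc
    set g : Fin n → ℝ := fun i => gauss D H (x - xs i) with hg
    set h : Fin L → ℝ := fun ℓ => gauss D (Cov ℓ) (x - μs ℓ) with hh
    have eA : ∑ i, ∑ j, c^2 * (g i * g j) = c^2 * ((∑ i, g i) * (∑ j, g j)) := by
      rw [Finset.sum_mul_sum]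
      simp only [Finset.mul_sum]
    have eB : ∑ i, ∑ ℓ, (2 * c * w ℓ) * (g i * h ℓ)
        = 2 * c * ((∑ i, g i) * (∑ ℓ, w ℓ * h ℓ)) := by
      rw [Finset.sum_mul_sum]
      simp only [Finset.mul_sum]
      refine Finset.sum_congr rfl fun i _ => Finset.sum_congr rfl fun ℓ _ => by ring
    have eC : ∑ k, ∑ ℓ, (w k * w ℓ) * (h k * h ℓ)
        = (∑ k, w k * h k) * (∑ ℓ, w ℓ * h ℓ) := by
      rw [Finset.sum_mul_sum]
      refine Finset.sum_congr rfl fun k _ => Finset.sum_congr rfl fun ℓ _ => by ring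
    have e2 : ∀ ℓ, 2 / (n:ℝ) * w ℓ = 2 * c * w ℓ := fun ℓ => by rw [hc]; ring
    simp only [e2]
    rw [eA, eB, eC]
    ring
  rw [MeasureTheory.integral_congr_ae (Filter.Eventually.of_forall key)]
  have intA : ∀ (i j : Fin n), Integrable (fun x =>
      (1 / (n : ℝ))^2 * (gauss D H (x - xs i) * gauss D H (x - xs j))) :=
    fun i j => (gauss_prod_integrable hH hH _ _).const_mul _
  have intB : ∀ (i : Fin n) (ℓ : Fin L), Integrable (fun x =>
      (2 / (n : ℝ) * w ℓ) * (gauss D H (x - xs i) * gauss D (Cov ℓ) (x - μs ℓ))) :=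
    fun i ℓ => (gauss_prod_integrable hH (hCov ℓ) _ _).const_mul _
  have intC : ∀ (k ℓ : Fin L), Integrable (fun x =>
      (w k * w ℓ) * (gauss D (Cov k) (x - μs k) * gauss D (Cov ℓ) (x - μs ℓ))) :=
    fun k ℓ => (gauss_prod_integrable (hCov k) (hCov ℓ) _ _).const_mul _
  have iA : Integrable (fun x => ∑ i, ∑ j, (1 / (n : ℝ))^2 *
      (gauss D H (x - xs i) * gauss D H (x - xs j))) :=
    integrable_finset_sum _ fun i _ => integrable_finset_sum _ fun j _ => intA i j
  have iB : Integrable (fun x => ∑ i, ∑ ℓ, (2 / (n : ℝ) * w ℓ) *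
      (gauss D H (x - xs i) * gauss D (Cov ℓ) (x - μs ℓ))) :=
    integrable_finset_sum _ fun i _ => integrable_finset_sum _ fun ℓ _ => intB i ℓ
  have iC : Integrable (fun x => ∑ k, ∑ ℓ, (w k * w ℓ) *
      (gauss D (Cov k) (x - μs k) * gauss D (Cov ℓ) (x - μs ℓ))) :=
    integrable_finset_sum _ fun k _ => integrable_finset_sum _ fun ℓ _ => intC k ℓ
  have iAB : Integrable (fun x =>
      (∑ i, ∑ j, (1 / (n : ℝ))^2 * (gauss D H (x - xs i) * gauss D H (x - xs j)))
      - ∑ i, ∑ ℓ, (2 / (n : ℝ) * w ℓ) *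
          (gauss D H (x - xs i) * gauss D (Cov ℓ) (x - μs ℓ))) := iA.sub iB
  rw [MeasureTheory.integral_add iAB iC, MeasureTheory.integral_sub iA iB]
  congr 1
  · congr 1
    · rw [MeasureTheory.integral_finset_sum _ fun i _ =>
        integrable_finset_sum _ fun j _ => intA i j]
      refine Finset.sum_congr rfl fun i _ => ?_
      rw [MeasureTheory.integral_finset_sum _ fun j _ => intA i j]
      refine Finset.sum_congr rfl fun j _ => ?_
      rw [MeasureTheory.integral_const_mul, gauss_prod_integral hH hH]
    · rw [MeasureTheory.integral_finset_sum _ fun i _ =>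
        integrable_finset_sum _ fun ℓ _ => intB i ℓ]
      refine Finset.sum_congr rfl fun i _ => ?_
      rw [MeasureTheory.integral_finset_sum _ fun ℓ _ => intB i ℓ]
      refine Finset.sum_congr rfl fun ℓ _ => ?_
      rw [MeasureTheory.integral_const_mul, gauss_prod_integral hH (hCov ℓ)]
  · rw [MeasureTheory.integral_finset_sum _ fun k _ =>
      integrable_finset_sum _ fun ℓ _ => intC k ℓ]
    refine Finset.sum_congr rfl fun k _ => ?_
    rw [MeasureTheory.integral_finset_sum _ fun ℓ _ => intC k ℓ]
    refine Finset.sum_congr rfl fun ℓ _ => ?_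
    rw [MeasureTheory.integral_const_mul, gauss_prod_integral (hCov k) (hCov ℓ)]

end inner

section mixture

variable {D L : ℕ} {w : Fin L → ℝ} {Cov : Fin L → Matrix (Fin D) (Fin D) ℝ}
  {μs : Fin L → Fin D → ℝ} {f : (Fin D → ℝ) → ℝ}

lemma f_cont (hf : ∀ x, f x = ∑ ℓ, w ℓ * gauss D (Cov ℓ) (x - μs ℓ)) : Continuous f := by
  have : f = fun x => ∑ ℓ, w ℓ * gauss D (Cov ℓ) (x - μs ℓ) := funext hf
  rw [this]
  refine continuous_finset_sum _ fun ℓ _ => Continuous.mul continuous_const ?_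
  exact (continuous_gauss _).comp (continuous_id.sub continuous_const)

lemma f_nonneg (hf : ∀ x, f x = ∑ ℓ, w ℓ * gauss D (Cov ℓ) (x - μs ℓ))
    (hw : ∀ ℓ, 0 ≤ w ℓ) (hCov : ∀ ℓ, (Cov ℓ).PosDef) (x : Fin D → ℝ) : 0 ≤ f x := by
  rw [hf]
  exact Finset.sum_nonneg fun ℓ _ => mul_nonneg (hw ℓ) (gauss_pos (hCov ℓ) _).le

lemma f_int (hf : ∀ x, f x = ∑ ℓ, w ℓ * gauss D (Cov ℓ) (x - μs ℓ))
    (hCov : ∀ ℓ, (Cov ℓ).PosDef) : Integrable f := by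
  have : f = fun x => ∑ ℓ, w ℓ * gauss D (Cov ℓ) (x - μs ℓ) := funext hf
  rw [this]
  exact integrable_finset_sum _ fun ℓ _ => (integrable_gauss_sub (hCov ℓ) _).const_mul _

lemma f_integral (hf : ∀ x, f x = ∑ ℓ, w ℓ * gauss D (Cov ℓ) (x - μs ℓ))
    (hCov : ∀ ℓ, (Cov ℓ).PosDef) (hw1 : ∑ ℓ, w ℓ = 1) : ∫ x, f x = 1 := by
  have : f = fun x => ∑ ℓ, w ℓ * gauss D (Cov ℓ) (x - μs ℓ) := funext hf
  rw [this, MeasureTheory.integral_finset_sum _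
    (fun ℓ _ => (integrable_gauss_sub (hCov ℓ) _).const_mul _)]
  calc ∑ ℓ, ∫ x, w ℓ * gauss D (Cov ℓ) (x - μs ℓ)
      = ∑ ℓ, w ℓ * ∫ x, gauss D (Cov ℓ) (x - μs ℓ) := by
        exact Finset.sum_congr rfl fun ℓ _ => MeasureTheory.integral_const_mul _ _
    _ = ∑ ℓ, w ℓ := by
        refine Finset.sum_congr rfl fun ℓ _ => ?_
        rw [integral_gauss_sub (hCov ℓ), mul_one]
    _ = 1 := hw1

/-- `gauss M (x - ·) * f` is integrable and integrates to a mixture of gaussians. -/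
lemma gf_pt (hf : ∀ x, f x = ∑ ℓ, w ℓ * gauss D (Cov ℓ) (x - μs ℓ))
    (M : Matrix (Fin D) (Fin D) ℝ) (x : Fin D → ℝ) :
    (fun u => gauss D M (x - u) * f u)
      = fun u => ∑ ℓ, w ℓ * (gauss D M (u - x) * gauss D (Cov ℓ) (u - μs ℓ)) := by
  funext u
  rw [hf u, gauss_sub_comm, Finset.mul_sum]
  exact Finset.sum_congr rfl fun ℓ _ => by ring

lemma gf_int (hf : ∀ x, f x = ∑ ℓ, w ℓ * gauss D (Cov ℓ) (x - μs ℓ))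
    (hCov : ∀ ℓ, (Cov ℓ).PosDef) {M : Matrix (Fin D) (Fin D) ℝ} (hM : M.PosDef)
    (x : Fin D → ℝ) : Integrable (fun u => gauss D M (x - u) * f u) := by
  rw [gf_pt hf M x]
  exact integrable_finset_sum _ fun ℓ _ =>
    (gauss_prod_integrable hM (hCov ℓ) _ _).const_mul _

lemma gf_integral (hf : ∀ x, f x = ∑ ℓ, w ℓ * gauss D (Cov ℓ) (x - μs ℓ))
    (hCov : ∀ ℓ, (Cov ℓ).PosDef) {M : Matrix (Fin D) (Fin D) ℝ} (hM : M.PosDef)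
    (x : Fin D → ℝ) :
    ∫ u, gauss D M (x - u) * f u = ∑ ℓ, w ℓ * gauss D (M + Cov ℓ) (x - μs ℓ) := by
  rw [gf_pt hf M x, MeasureTheory.integral_finset_sum _ (fun ℓ _ =>
    (gauss_prod_integrable hM (hCov ℓ) _ _).const_mul _)]
  refine Finset.sum_congr rfl fun ℓ _ => ?_
  rw [MeasureTheory.integral_const_mul, gauss_prod_integral hM (hCov ℓ)]

end mixture

section split

variable {n : ℕ}

lemma prod_split1 (i : Fin n) (F : Fin n → ℝ) :
    ∏ k, F k = F i * ∏ k ∈ Finset.univ.erase i, F k :=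
  (Finset.mul_prod_erase _ _ (Finset.mem_univ i)).symm

lemma prod_split2 {i j : Fin n} (hij : j ≠ i) (F : Fin n → ℝ) :
    ∏ k, F k = F i * (F j * ∏ k ∈ (Finset.univ.erase i).erase j, F k) := by
  rw [prod_split1 i F, Finset.mul_prod_erase _ _
    (Finset.mem_erase.mpr ⟨hij, Finset.mem_univ j⟩)]

end split

section marg

variable {D : ℕ} {n : ℕ}

lemma marg1_pt (f g : (Fin D → ℝ) → ℝ) (i : Fin n) (xs : Fin n → Fin D → ℝ) :
    g (xs i) * ∏ k, f (xs k)
      = ∏ k, (fun k' => if k' = i then (fun u => g u * f u) else f) k (xs k) := by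
  classical
  rw [prod_split1 i (fun k => (fun k' => if k' = i then (fun u => g u * f u) else f) k (xs k)),
    prod_split1 i (fun k => f (xs k))]
  have h2 : ∏ k ∈ Finset.univ.erase i,
      (fun k' => if k' = i then (fun u => g u * f u) else f) k (xs k)
      = ∏ k ∈ Finset.univ.erase i, f (xs k) :=
    Finset.prod_congr rfl fun k hk => by simp [(Finset.mem_erase.mp hk).1]
  have e1 : (fun k' => if k' = i then (fun u => g u * f u) else f) i (xs i)
      = g (xs i) * f (xs i) := by simp
  rw [h2, e1]
  ring

lemma marg1_val (f g : (Fin D → ℝ) → ℝ) (hf1 : ∫ u, f u = 1) (i : Fin n) :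
    ∫ xs : Fin n → Fin D → ℝ, g (xs i) * ∏ k, f (xs k) = ∫ u, g u * f u := by
  classical
  erw [MeasureTheory.integral_congr_ae (Filter.Eventually.of_forall (marg1_pt f g i)),
    MeasureTheory.integral_fintype_prod_eq_prod
      (fun k' => if k' = i then (fun u => g u * f u) else f),
    prod_split1 i]
  have h2 : ∏ k ∈ Finset.univ.erase i,
      (∫ u, (fun k' => if k' = i then (fun u' => g u' * f u') else f) k u) = 1 :=
    Finset.prod_eq_one fun k hk => by
      simp only [if_neg (Finset.mem_erase.mp hk).1]; exact hf1
  rw [h2, mul_one, if_pos rfl]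

lemma marg1_int (f g : (Fin D → ℝ) → ℝ) (hfint : Integrable f)
    (hgf : Integrable (fun u => g u * f u)) (i : Fin n) :
    Integrable (fun xs : Fin n → Fin D → ℝ => g (xs i) * ∏ k, f (xs k)) := by
  classical
  have : (fun xs : Fin n → Fin D → ℝ => g (xs i) * ∏ k, f (xs k))
      = fun xs => ∏ k, (fun k' => if k' = i then (fun u => g u * f u) else f) k (xs k) :=
    funext (marg1_pt f g i)
  rw [this]
  refine Integrable.fintype_prod fun k => ?_
  by_cases hk : k = i
  · simpa [hk] using hgf
  · simpa [hk] using hfint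

lemma marg2_pt (f g1 g2 : (Fin D → ℝ) → ℝ) {i j : Fin n} (hij : j ≠ i)
    (xs : Fin n → Fin D → ℝ) :
    g1 (xs i) * g2 (xs j) * ∏ k, f (xs k)
      = ∏ k, (fun k' => if k' = i then (fun u => g1 u * f u)
          else if k' = j then (fun u => g2 u * f u) else f) k (xs k) := by
  classical
  set h := fun k' => if k' = i then (fun u => g1 u * f u)
      else if k' = j then (fun u => g2 u * f u) else f with hh
  rw [prod_split2 hij (fun k => h k (xs k)), prod_split2 hij (fun k => f (xs k))]
  have h2 : ∏ k ∈ (Finset.univ.erase i).erase j, h k (xs k)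
      = ∏ k ∈ (Finset.univ.erase i).erase j, f (xs k) := by
    refine Finset.prod_congr rfl fun k hk => ?_
    have hk1 := (Finset.mem_erase.mp hk).1
    have hk2 := (Finset.mem_erase.mp (Finset.mem_erase.mp hk).2).1
    simp [hh, hk1, hk2]
  rw [h2]
  have e1 : h i (xs i) = g1 (xs i) * f (xs i) := by simp [hh]
  have e2 : h j (xs j) = g2 (xs j) * f (xs j) := by simp [hh, hij]
  rw [e1, e2]
  ring

lemma marg2_val (f g1 g2 : (Fin D → ℝ) → ℝ) (hf1 : ∫ u, f u = 1) {i j : Fin n}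
    (hij : j ≠ i) :
    ∫ xs : Fin n → Fin D → ℝ, g1 (xs i) * g2 (xs j) * ∏ k, f (xs k)
      = (∫ u, g1 u * f u) * ∫ u, g2 u * f u := by
  classical
  set h := fun k' => if k' = i then (fun u => g1 u * f u)
      else if k' = j then (fun u => g2 u * f u) else f with hh
  erw [MeasureTheory.integral_congr_ae (Filter.Eventually.of_forall (marg2_pt f g1 g2 hij)),
    MeasureTheory.integral_fintype_prod_eq_prod h,
    prod_split2 hij (fun k => ∫ u, h k u)]
  have h2 : ∏ k ∈ (Finset.univ.erase i).erase j, (∫ u, h k u) = 1 := by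
    refine Finset.prod_eq_one fun k hk => ?_
    have hk1 := (Finset.mem_erase.mp hk).1
    have hk2 := (Finset.mem_erase.mp (Finset.mem_erase.mp hk).2).1
    simp only [hh, if_neg hk2, if_neg hk1]
    exact hf1
  have e1 : (∫ u, h i u) = ∫ u, g1 u * f u := by simp [hh]
  have e2 : (∫ u, h j u) = ∫ u, g2 u * f u := by simp [hh, hij]
  rw [h2, e1, e2, mul_one]

lemma marg2_int (f g1 g2 : (Fin D → ℝ) → ℝ) (hfint : Integrable f)
    (hg1f : Integrable (fun u => g1 u * f u)) (hg2f : Integrable (fun u => g2 u * f u))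
    {i j : Fin n} (hij : j ≠ i) :
    Integrable (fun xs : Fin n → Fin D → ℝ => g1 (xs i) * g2 (xs j) * ∏ k, f (xs k)) := by
  classical
  have : (fun xs : Fin n → Fin D → ℝ => g1 (xs i) * g2 (xs j) * ∏ k, f (xs k))
      = fun xs => ∏ k, (fun k' => if k' = i then (fun u => g1 u * f u)
          else if k' = j then (fun u => g2 u * f u) else f) k (xs k) :=
    funext (marg2_pt f g1 g2 hij)
  rw [this]
  refine Integrable.fintype_prod fun k => ?_
  by_cases hk1 : k = i
  · simpa [hk1] using hg1f
  · by_cases hk2 : k = j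
    · simpa [hk1, hk2, hij] using hg2f
    · simpa [hk1, hk2] using hfint

end marg

section pair

variable {D L n : ℕ} {w : Fin L → ℝ} {Cov : Fin L → Matrix (Fin D) (Fin D) ℝ}
  {μs : Fin L → Fin D → ℝ} {f : (Fin D → ℝ) → ℝ} {H : Matrix (Fin D) (Fin D) ℝ}

/-- integral of the square of the `H`-smoothed mixture. -/
lemma TT_integral (hCov : ∀ ℓ, (Cov ℓ).PosDef) (hH : H.PosDef) :
    Integrable (fun x => (∑ ℓ, w ℓ * gauss D (H + Cov ℓ) (x - μs ℓ)) *
        ∑ m, w m * gauss D (H + Cov m) (x - μs m)) ∧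
    ∫ x, (∑ ℓ, w ℓ * gauss D (H + Cov ℓ) (x - μs ℓ)) *
        ∑ m, w m * gauss D (H + Cov m) (x - μs m)
      = ∑ ℓ, ∑ m, (w ℓ * w m) * gauss D ((H + Cov ℓ) + (H + Cov m)) (μs ℓ - μs m) := by
  have hpt : ∀ x, (∑ ℓ, w ℓ * gauss D (H + Cov ℓ) (x - μs ℓ)) *
      (∑ m, w m * gauss D (H + Cov m) (x - μs m))
      = ∑ ℓ, ∑ m, (w ℓ * w m) *
          (gauss D (H + Cov ℓ) (x - μs ℓ) * gauss D (H + Cov m) (x - μs m)) := by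
    intro x
    rw [Finset.sum_mul_sum]
    exact Finset.sum_congr rfl fun ℓ _ => Finset.sum_congr rfl fun m _ => by ring
  have hint : ∀ (ℓ m : Fin L), Integrable (fun x => (w ℓ * w m) *
      (gauss D (H + Cov ℓ) (x - μs ℓ) * gauss D (H + Cov m) (x - μs m))) :=
    fun ℓ m => (gauss_prod_integrable (hH.add (hCov ℓ)) (hH.add (hCov m)) _ _).const_mul _
  constructor
  · have hI : Integrable (fun x => ∑ ℓ, ∑ m, (w ℓ * w m) *
        (gauss D (H + Cov ℓ) (x - μs ℓ) * gauss D (H + Cov m) (x - μs m))) :=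
      integrable_finset_sum _ fun ℓ _ => integrable_finset_sum _ fun m _ => hint ℓ m
    exact hI.congr (Filter.Eventually.of_forall fun x => (hpt x).symm)
  · rw [MeasureTheory.integral_congr_ae (Filter.Eventually.of_forall hpt),
      MeasureTheory.integral_finset_sum _ (fun ℓ _ =>
        integrable_finset_sum _ fun m _ => hint ℓ m)]
    refine Finset.sum_congr rfl fun ℓ _ => ?_
    rw [MeasureTheory.integral_finset_sum _ (fun m _ => hint ℓ m)]
    refine Finset.sum_congr rfl fun m _ => ?_
    rw [MeasureTheory.integral_const_mul, gauss_prod_integral (hH.add (hCov ℓ)) (hH.add (hCov m))]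

lemma pair_term (hf : ∀ x, f x = ∑ ℓ, w ℓ * gauss D (Cov ℓ) (x - μs ℓ))
    (hw : ∀ ℓ, 0 ≤ w ℓ) (hw1 : ∑ ℓ, w ℓ = 1) (hCov : ∀ ℓ, (Cov ℓ).PosDef)
    (hH : H.PosDef) {i j : Fin n} (hij : j ≠ i) :
    ∫ xs : Fin n → Fin D → ℝ, gauss D (H + H) (xs i - xs j) * ∏ k, f (xs k)
      = ∑ ℓ, ∑ m, (w ℓ * w m) * gauss D ((H + Cov ℓ) + (H + Cov m)) (μs ℓ - μs m) := by
  have hf1 : ∫ u, f u = 1 := f_integral hf hCov hw1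
  have hfint : Integrable f := f_int hf hCov
  set F : (Fin D → ℝ) → (Fin n → Fin D → ℝ) → ℝ := fun x xs =>
    gauss D H (x - xs i) * gauss D H (x - xs j) * ∏ k, f (xs k) with hF
  -- each slice integral over xs
  have hslice : ∀ x, ∫ xs : Fin n → Fin D → ℝ, F x xs
      = (∫ u, gauss D H (x - u) * f u) * ∫ u, gauss D H (x - u) * f u := by
    intro x
    exact marg2_val f (fun u => gauss D H (x - u)) (fun u => gauss D H (x - u)) hf1 hij
  have hsliceInt : ∀ x, Integrable (fun xs : Fin n → Fin D → ℝ => F x xs) := by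
    intro x
    exact marg2_int f (fun u => gauss D H (x - u)) (fun u => gauss D H (x - u)) hfint
      (gf_int hf hCov hH x) (gf_int hf hCov hH x) hij
  -- continuity / measurability of F
  have hFc : Continuous (Function.uncurry F) := by
    have c1 : Continuous fun p : (Fin D → ℝ) × (Fin n → Fin D → ℝ) => p.1 - p.2 i := by
      exact continuous_fst.sub ((continuous_apply i).comp continuous_snd)
    have c2 : Continuous fun p : (Fin D → ℝ) × (Fin n → Fin D → ℝ) => p.1 - p.2 j := by
      exact continuous_fst.sub ((continuous_apply j).comp continuous_snd)
    refine Continuous.mul (Continuous.mul ((continuous_gauss H).comp c1)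
      ((continuous_gauss H).comp c2)) ?_
    exact continuous_finset_prod _ fun k _ =>
      (f_cont hf).comp ((continuous_apply k).comp continuous_snd)
  -- F is nonnegative
  have hFnn : ∀ x xs, 0 ≤ F x xs := by
    intro x xs
    refine mul_nonneg (mul_nonneg (gauss_pos hH _).le (gauss_pos hH _).le) ?_
    exact Finset.prod_nonneg fun k _ => f_nonneg hf hw hCov _
  -- integrability on the product space
  have hFint : Integrable (Function.uncurry F) ((volume : Measure (Fin D → ℝ)).prod volume) := by
    refine (integrable_prod_iff hFc.aestronglyMeasurable).mpr ⟨?_, ?_⟩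
    · exact Filter.Eventually.of_forall fun x => hsliceInt x
    · have : (fun x => ∫ xs, ‖F x xs‖) =
          fun x => (∑ ℓ, w ℓ * gauss D (H + Cov ℓ) (x - μs ℓ)) *
            ∑ m, w m * gauss D (H + Cov m) (x - μs m) := by
        funext x
        have : (fun xs : Fin n → Fin D → ℝ => ‖F x xs‖) = fun xs => F x xs := by
          funext xs; exact Real.norm_of_nonneg (hFnn x xs)
        rw [this, hslice x, gf_integral hf hCov hH x]
      simp only [Function.uncurry_apply_pair]
      rw [this]
      exact (TT_integral hCov hH).1
  -- now the computation
  have step1 : ∀ xs : Fin n → Fin D → ℝ,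
      gauss D (H + H) (xs i - xs j) * ∏ k, f (xs k) = ∫ x, F x xs := by
    intro xs
    rw [hF]
    simp only
    rw [MeasureTheory.integral_mul_const, gauss_prod_integral hH hH]
  rw [MeasureTheory.integral_congr_ae (Filter.Eventually.of_forall step1),
    ← MeasureTheory.integral_integral_swap hFint]
  have : (fun x => ∫ xs : Fin n → Fin D → ℝ, F x xs) =
      fun x => (∑ ℓ, w ℓ * gauss D (H + Cov ℓ) (x - μs ℓ)) *
        ∑ m, w m * gauss D (H + Cov m) (x - μs m) := by
    funext x
    rw [hslice x, gf_integral hf hCov hH x]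
  rw [MeasureTheory.integral_congr_ae (Filter.Eventually.of_forall fun x =>
    congrFun this x)]
  exact (TT_integral hCov hH).2

end pair


section final

variable {D : ℕ} {H : Matrix (Fin D) (Fin D) ℝ}

lemma gauss_double_zero (hH : H.PosDef) :
    gauss D (H + H) 0 = (4 * π) ^ (-(D:ℝ)/2) * H.det ^ (-(1:ℝ)/2) := by
  rw [gauss_zero_eq]
  have h2 : H + H = (2:ℝ) • H := (two_smul ℝ H).symm
  rw [h2, Matrix.det_smul, Fintype.card_fin]
  have hdetH : (0:ℝ) < H.det := hH.det_pos
  have e1 : ((2:ℝ)^D * H.det) ^ (-(1:ℝ)/2)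
      = ((2:ℝ)^D) ^ (-(1:ℝ)/2) * H.det ^ (-(1:ℝ)/2) :=
    Real.mul_rpow (by positivity) hdetH.le
  have e2 : ((2:ℝ)^D) ^ (-(1:ℝ)/2) = (2:ℝ) ^ (-(D:ℝ)/2) := by
    rw [← Real.rpow_natCast 2 D, ← Real.rpow_mul (by norm_num)]
    congr 1
    ring
  have e3 : (4 * π) ^ (-(D:ℝ)/2) = (2:ℝ) ^ (-(D:ℝ)/2) * (2 * π) ^ (-(D:ℝ)/2) := by
    rw [← Real.mul_rpow (by norm_num) (by positivity)]
    congr 1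
    ring
  rw [e1, e2, e3]
  ring

end final

section helper2

variable {D L n : ℕ} {w : Fin L → ℝ} {Cov : Fin L → Matrix (Fin D) (Fin D) ℝ}
  {μs : Fin L → Fin D → ℝ} {f : (Fin D → ℝ) → ℝ}

lemma bddg_int (hf : ∀ x, f x = ∑ ℓ, w ℓ * gauss D (Cov ℓ) (x - μs ℓ))
    (hCov : ∀ ℓ, (Cov ℓ).PosDef) {M : Matrix (Fin D) (Fin D) ℝ} (hM : M.PosDef)
    (g : (Fin n → Fin D → ℝ) → (Fin D → ℝ)) (hg : Continuous g) :
    Integrable (fun xs : Fin n → Fin D → ℝ => gauss D M (g xs) * ∏ k, f (xs k)) := by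
  have hPint : Integrable (fun xs : Fin n → Fin D → ℝ => ∏ k, f (xs k)) :=
    Integrable.fintype_prod (f := fun _ : Fin n => f) fun _ => f_int hf hCov
  refine hPint.bdd_mul (c := gauss D M 0) ?_ ?_
  · exact ((continuous_gauss M).comp hg).aestronglyMeasurable
  · exact Filter.Eventually.of_forall fun xs => by
      rw [Real.norm_of_nonneg (gauss_pos hM _).le]; exact gauss_le hM _

end helper2


/-- Expected ISE between the kernel estimator and the true Gaussian mixture:
`E[d_ISE(f̂, f)] = (1/n)(4π)^{-D/2}|H|^{-1/2} + wᵀ((1 − 1/n)Ω₂ − 2Ω₁ + Ω₀)w`. -/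
theorem expected_ise_kde_truth (D L n : ℕ) (hn : 0 < n)
    (w : Fin L → ℝ) (hw : ∀ ℓ, 0 ≤ w ℓ) (hw1 : ∑ ℓ, w ℓ = 1)
    (Cov : Fin L → Matrix (Fin D) (Fin D) ℝ) (hCov : ∀ ℓ, (Cov ℓ).PosDef)
    (μs : Fin L → (Fin D → ℝ))
    (H : Matrix (Fin D) (Fin D) ℝ) (hH : H.PosDef)
    (f : (Fin D → ℝ) → ℝ)
    (hf : ∀ x, f x = ∑ ℓ, w ℓ * gauss D (Cov ℓ) (x - μs ℓ))
    (Ω₀ Ω₁ Ω₂ : Matrix (Fin L) (Fin L) ℝ)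
    (hΩ₀ : ∀ i j, Ω₀ i j = gauss D (Cov i + Cov j) (μs i - μs j))
    (hΩ₁ : ∀ i j, Ω₁ i j = gauss D (H + Cov i + Cov j) (μs i - μs j))
    (hΩ₂ : ∀ i j, Ω₂ i j = gauss D (2 • H + Cov i + Cov j) (μs i - μs j)) :
    ∫ xs : Fin n → Fin D → ℝ,
        (∫ x : Fin D → ℝ,
            ((1 / (n : ℝ)) * ∑ i, gauss D H (x - xs i) - f x) ^ 2) *
          ∏ i, f (xs i) =
      (1 / (n : ℝ)) * (4 * Real.pi) ^ (-(D : ℝ) / 2) * H.det ^ (-(1 : ℝ) / 2)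
        + w ⬝ᵥ (((1 - 1 / (n : ℝ)) • Ω₂ - 2 • Ω₁ + Ω₀) *ᵥ w) := by
  classical
  have hn0 : (n:ℝ) ≠ 0 := Nat.cast_ne_zero.mpr hn.ne'
  have hfint : Integrable f := f_int hf hCov
  have hf1 : ∫ u, f u = 1 := f_integral hf hCov hw1
  have hHH : (H+H).PosDef := hH.add hH
  have hPint : Integrable (fun xs : Fin n → Fin D → ℝ => ∏ k, f (xs k)) :=
    Integrable.fintype_prod (f := fun _ : Fin n => f) fun _ => hfint
  have hP1 : ∫ xs : Fin n → Fin D → ℝ, ∏ k, f (xs k) = 1 := by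
    erw [MeasureTheory.integral_fintype_prod_eq_pow (ι := Fin n) f, hf1, one_pow]
  -- step 1 : inner integral
  have hinner : ∀ xs : Fin n → Fin D → ℝ,
      (∫ x, ((1/(n:ℝ)) * ∑ i, gauss D H (x - xs i) - f x)^2)
        = (∑ i, ∑ j, (1/(n:ℝ))^2 * gauss D (H+H) (xs i - xs j))
          - (∑ i, ∑ ℓ, (2/(n:ℝ) * w ℓ) * gauss D (H + Cov ℓ) (xs i - μs ℓ))
          + (∑ k, ∑ ℓ, (w k * w ℓ) * gauss D (Cov k + Cov ℓ) (μs k - μs ℓ)) := by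
    intro xs
    have e : (fun x => ((1/(n:ℝ)) * ∑ i, gauss D H (x - xs i) - f x)^2)
        = fun x => ((1/(n:ℝ)) * ∑ i, gauss D H (x - xs i)
            - ∑ ℓ, w ℓ * gauss D (Cov ℓ) (x - μs ℓ))^2 := by
      funext x; rw [hf x]
    rw [e, inner_int n w Cov hCov μs H hH xs]
  -- step 2 : rewrite outer integrand as sums of integrable pieces
  have hout : ∀ xs : Fin n → Fin D → ℝ,
      (∫ x, ((1/(n:ℝ)) * ∑ i, gauss D H (x - xs i) - f x)^2) * ∏ i, f (xs i)
      = (∑ i, ∑ j, (1/(n:ℝ))^2 * (gauss D (H+H) (xs i - xs j) * ∏ k, f (xs k)))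
        - (∑ i, ∑ ℓ, (2/(n:ℝ) * w ℓ) *
            (gauss D (H + Cov ℓ) (xs i - μs ℓ) * ∏ k, f (xs k)))
        + (∑ k, ∑ ℓ, (w k * w ℓ) * gauss D (Cov k + Cov ℓ) (μs k - μs ℓ))
            * ∏ k, f (xs k) := by
    intro xs
    rw [hinner xs]
    have eA : (∑ i, ∑ j, (1/(n:ℝ))^2 * gauss D (H+H) (xs i - xs j)) * ∏ k, f (xs k)
        = ∑ i, ∑ j, (1/(n:ℝ))^2 * (gauss D (H+H) (xs i - xs j) * ∏ k, f (xs k)) := by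
      rw [Finset.sum_mul]
      refine Finset.sum_congr rfl fun i _ => ?_
      rw [Finset.sum_mul]
      exact Finset.sum_congr rfl fun j _ => by ring
    have eB : (∑ i, ∑ ℓ, (2/(n:ℝ) * w ℓ) * gauss D (H + Cov ℓ) (xs i - μs ℓ))
          * ∏ k, f (xs k)
        = ∑ i, ∑ ℓ, (2/(n:ℝ) * w ℓ) *
            (gauss D (H + Cov ℓ) (xs i - μs ℓ) * ∏ k, f (xs k)) := by
      rw [Finset.sum_mul]
      refine Finset.sum_congr rfl fun i _ => ?_
      rw [Finset.sum_mul]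
      exact Finset.sum_congr rfl fun ℓ _ => by ring
    rw [← eA, ← eB]
    ring
  rw [MeasureTheory.integral_congr_ae (Filter.Eventually.of_forall hout)]
  -- integrability of the pieces
  have hAterm : ∀ i j : Fin n, Integrable (fun xs : Fin n → Fin D → ℝ =>
      (1/(n:ℝ))^2 * (gauss D (H+H) (xs i - xs j) * ∏ k, f (xs k))) := fun i j =>
    (bddg_int hf hCov hHH _ ((continuous_apply i).sub (continuous_apply j))).const_mul _
  have hBterm : ∀ (i : Fin n) (ℓ : Fin L), Integrable (fun xs : Fin n → Fin D → ℝ =>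
      (2/(n:ℝ) * w ℓ) * (gauss D (H + Cov ℓ) (xs i - μs ℓ) * ∏ k, f (xs k))) := fun i ℓ =>
    (bddg_int hf hCov (hH.add (hCov ℓ)) _
      ((continuous_apply i).sub continuous_const)).const_mul _
  have hAint : Integrable (fun xs : Fin n → Fin D → ℝ =>
      ∑ i, ∑ j, (1/(n:ℝ))^2 * (gauss D (H+H) (xs i - xs j) * ∏ k, f (xs k))) :=
    integrable_finset_sum _ fun i _ => integrable_finset_sum _ fun j _ => hAterm i j
  have hBint : Integrable (fun xs : Fin n → Fin D → ℝ =>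
      ∑ i, ∑ ℓ, (2/(n:ℝ) * w ℓ) * (gauss D (H + Cov ℓ) (xs i - μs ℓ) * ∏ k, f (xs k))) :=
    integrable_finset_sum _ fun i _ => integrable_finset_sum _ fun ℓ _ => hBterm i ℓ
  have hABint : Integrable (fun xs : Fin n → Fin D → ℝ =>
      (∑ i, ∑ j, (1/(n:ℝ))^2 * (gauss D (H+H) (xs i - xs j) * ∏ k, f (xs k)))
      - ∑ i, ∑ ℓ, (2/(n:ℝ) * w ℓ) *
          (gauss D (H + Cov ℓ) (xs i - μs ℓ) * ∏ k, f (xs k))) := hAint.sub hBint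
  rw [MeasureTheory.integral_add hABint (hPint.const_mul _),
    MeasureTheory.integral_sub hAint hBint, MeasureTheory.integral_const_mul, hP1, mul_one]
  -- value of the A part
  have hV : ∀ i j : Fin n, ∫ xs : Fin n → Fin D → ℝ,
      gauss D (H+H) (xs i - xs j) * ∏ k, f (xs k)
      = if i = j then gauss D (H+H) 0
        else ∑ ℓ, ∑ m, (w ℓ * w m) * gauss D ((H + Cov ℓ) + (H + Cov m)) (μs ℓ - μs m) := by
    intro i j
    by_cases hij : i = j
    · subst hij
      rw [if_pos rfl]
      have e : (fun xs : Fin n → Fin D → ℝ => gauss D (H+H) (xs i - xs i) * ∏ k, f (xs k))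
          = fun xs => gauss D (H+H) 0 * ∏ k, f (xs k) := by
        funext xs; rw [sub_self]
      rw [e, MeasureTheory.integral_const_mul, hP1, mul_one]
    · rw [if_neg hij]
      exact pair_term hf hw hw1 hCov hH (fun h => hij (h.symm))
  have hAval : ∫ xs : Fin n → Fin D → ℝ,
      ∑ i, ∑ j, (1/(n:ℝ))^2 * (gauss D (H+H) (xs i - xs j) * ∏ k, f (xs k))
      = (1/(n:ℝ)) * gauss D (H+H) 0
        + ((n:ℝ) - 1) * (1/(n:ℝ)) *
          (∑ ℓ, ∑ m, (w ℓ * w m) * gauss D ((H + Cov ℓ) + (H + Cov m)) (μs ℓ - μs m)) := by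
    rw [MeasureTheory.integral_finset_sum _ (fun i _ =>
      integrable_finset_sum _ fun j _ => hAterm i j)]
    have e : ∀ i : Fin n, ∫ xs : Fin n → Fin D → ℝ,
        ∑ j, (1/(n:ℝ))^2 * (gauss D (H+H) (xs i - xs j) * ∏ k, f (xs k))
        = (1/(n:ℝ))^2 * gauss D (H+H) 0
          + ((n:ℝ) - 1) * ((1/(n:ℝ))^2 *
            (∑ ℓ, ∑ m, (w ℓ * w m) * gauss D ((H + Cov ℓ) + (H + Cov m)) (μs ℓ - μs m))) := by
      intro i
      rw [MeasureTheory.integral_finset_sum _ (fun j _ => hAterm i j)]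
      have e2 : ∀ j : Fin n, ∫ xs : Fin n → Fin D → ℝ,
          (1/(n:ℝ))^2 * (gauss D (H+H) (xs i - xs j) * ∏ k, f (xs k))
          = (1/(n:ℝ))^2 * (if i = j then gauss D (H+H) 0
            else ∑ ℓ, ∑ m, (w ℓ * w m) * gauss D ((H + Cov ℓ) + (H + Cov m)) (μs ℓ - μs m)) := by
        intro j
        rw [MeasureTheory.integral_const_mul, hV i j]
      rw [Finset.sum_congr rfl fun j _ => e2 j]
      rw [← Finset.add_sum_erase _ _ (Finset.mem_univ i), if_pos rfl]
      have e3 : ∑ j ∈ Finset.univ.erase i, (1/(n:ℝ))^2 * (if i = j then gauss D (H+H) 0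
          else ∑ ℓ, ∑ m, (w ℓ * w m) * gauss D ((H + Cov ℓ) + (H + Cov m)) (μs ℓ - μs m))
          = ((n:ℝ) - 1) * ((1/(n:ℝ))^2 *
            (∑ ℓ, ∑ m, (w ℓ * w m) * gauss D ((H + Cov ℓ) + (H + Cov m)) (μs ℓ - μs m))) := by
        rw [Finset.sum_congr rfl (fun j hj => by
          rw [if_neg (fun h => (Finset.mem_erase.mp hj).1 h.symm)])]
        rw [Finset.sum_const, Finset.card_erase_of_mem (Finset.mem_univ i),
          Finset.card_univ, Fintype.card_fin, nsmul_eq_mul, Nat.cast_sub hn, Nat.cast_one]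
      rw [e3]
    rw [Finset.sum_congr rfl fun i _ => e i, Finset.sum_const, Finset.card_univ,
      Fintype.card_fin, nsmul_eq_mul]
    field_simp
  -- value of the B part
  have hBval : ∫ xs : Fin n → Fin D → ℝ,
      ∑ i, ∑ ℓ, (2/(n:ℝ) * w ℓ) * (gauss D (H + Cov ℓ) (xs i - μs ℓ) * ∏ k, f (xs k))
      = 2 * ∑ ℓ, ∑ m, (w ℓ * w m) * gauss D (H + Cov ℓ + Cov m) (μs ℓ - μs m) := by
    rw [MeasureTheory.integral_finset_sum _ (fun i _ =>
      integrable_finset_sum _ fun ℓ _ => hBterm i ℓ)]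
    have e : ∀ i : Fin n, ∫ xs : Fin n → Fin D → ℝ,
        ∑ ℓ, (2/(n:ℝ) * w ℓ) * (gauss D (H + Cov ℓ) (xs i - μs ℓ) * ∏ k, f (xs k))
        = ∑ ℓ, (2/(n:ℝ) * w ℓ) *
            ∑ m, w m * gauss D (H + Cov ℓ + Cov m) (μs ℓ - μs m) := by
      intro i
      rw [MeasureTheory.integral_finset_sum _ (fun ℓ _ => hBterm i ℓ)]
      refine Finset.sum_congr rfl fun ℓ _ => ?_
      rw [MeasureTheory.integral_const_mul,
        marg1_val f (fun u => gauss D (H + Cov ℓ) (u - μs ℓ)) hf1 i]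
      have e2 : (fun u => gauss D (H + Cov ℓ) (u - μs ℓ) * f u)
          = fun u => gauss D (H + Cov ℓ) (μs ℓ - u) * f u := by
        funext u; rw [gauss_sub_comm]
      rw [e2, gf_integral hf hCov (hH.add (hCov ℓ)) (μs ℓ)]
    rw [Finset.sum_congr rfl fun i _ => e i, Finset.sum_const, Finset.card_univ,
      Fintype.card_fin, nsmul_eq_mul]
    rw [Finset.mul_sum]
    rw [Finset.mul_sum]
    refine Finset.sum_congr rfl fun ℓ _ => ?_
    rw [Finset.mul_sum, Finset.mul_sum, Finset.mul_sum]
    refine Finset.sum_congr rfl fun m _ => ?_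
    field_simp
  rw [hAval, hBval]
  -- final algebra
  have hg0 := gauss_double_zero hH
  have hmat : ∀ ℓ m : Fin L, (H + Cov ℓ) + (H + Cov m) = 2 • H + Cov ℓ + Cov m := by
    intro ℓ m; rw [two_smul]; abel
  have h2e : ∀ (x y : Fin L), (2 • Ω₁) x y = 2 * Ω₁ x y := fun x y => by simp
  have hdot : w ⬝ᵥ (((1 - 1 / (n : ℝ)) • Ω₂ - 2 • Ω₁ + Ω₀) *ᵥ w)
      = ∑ ℓ, ∑ m, w ℓ * (((1 - 1/(n:ℝ)) * Ω₂ ℓ m - 2 * Ω₁ ℓ m + Ω₀ ℓ m) * w m) := by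
    simp only [dotProduct, Matrix.mulVec, Matrix.sub_apply, Matrix.add_apply,
      Matrix.smul_apply, smul_eq_mul, h2e, Finset.mul_sum]
  rw [hdot, hg0]
  have hS2 : ∑ ℓ, ∑ m, (w ℓ * w m) * gauss D ((H + Cov ℓ) + (H + Cov m)) (μs ℓ - μs m)
      = ∑ ℓ, ∑ m, (w ℓ * w m) * Ω₂ ℓ m := by
    refine Finset.sum_congr rfl fun ℓ _ => Finset.sum_congr rfl fun m _ => ?_
    rw [hmat ℓ m, hΩ₂ ℓ m]
  have hS1 : ∑ ℓ, ∑ m, (w ℓ * w m) * gauss D (H + Cov ℓ + Cov m) (μs ℓ - μs m)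
      = ∑ ℓ, ∑ m, (w ℓ * w m) * Ω₁ ℓ m := by
    refine Finset.sum_congr rfl fun ℓ _ => Finset.sum_congr rfl fun m _ => ?_
    rw [hΩ₁ ℓ m]
  have hS0 : ∑ k, ∑ ℓ, (w k * w ℓ) * gauss D (Cov k + Cov ℓ) (μs k - μs ℓ)
      = ∑ k, ∑ ℓ, (w k * w ℓ) * Ω₀ k ℓ := by
    refine Finset.sum_congr rfl fun k _ => Finset.sum_congr rfl fun ℓ _ => ?_
    rw [hΩ₀ k ℓ]
  rw [hS2, hS1, hS0]
  have expand : ∑ ℓ, ∑ m, w ℓ * (((1 - 1/(n:ℝ)) * Ω₂ ℓ m - 2 * Ω₁ ℓ m + Ω₀ ℓ m) * w m)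
      = (1 - 1/(n:ℝ)) * (∑ ℓ, ∑ m, (w ℓ * w m) * Ω₂ ℓ m)
        - 2 * (∑ ℓ, ∑ m, (w ℓ * w m) * Ω₁ ℓ m)
        + ∑ ℓ, ∑ m, (w ℓ * w m) * Ω₀ ℓ m := by
    rw [Finset.mul_sum, Finset.mul_sum, ← Finset.sum_sub_distrib, ← Finset.sum_add_distrib]
    refine Finset.sum_congr rfl fun ℓ _ => ?_
    rw [Finset.mul_sum, Finset.mul_sum, ← Finset.sum_sub_distrib, ← Finset.sum_add_distrib]
    refine Finset.sum_congr rfl fun m _ => by ring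
  rw [expand]
  have hcoef : ((n:ℝ) - 1) * (1/(n:ℝ)) = 1 - 1/(n:ℝ) := by field_simp
  rw [hcoef]
  ring
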